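/- Let J be a finite index set and let {π^i_j : B_i → B_{ij} = B_{ji}}_{i ≠ j ∈ J} be a family of surjective homomorphisms of unital algebras (over a commutative ring k) that satisfies the cocycle condition, and assume that for each i ∈ J the kernels {ker π^i_j : j ≠ i} generate a distributive sublattice of the lattice of two-sided ideals of B_i. Let B^π be the multi-pullback of the family and let π_i : B^π → B_i be the restriction of the i-th canonical projection. Then for every i ∈ J the map π_i is surjective, so B_i ≅ B^π / ker π_i; moreover, for all distinct i, j ∈ J the map π_{ij} := π^i_j ∘ π_i = π^j_i ∘ π_j : B^π → B_{ij} is surjective and ker π_{ij} = ker π_i + ker π_j, so B_{ij} ≅ B^π / (ker π_i + ker π_j). -/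

import Mathlib

/-!
**Statement 2** (Lemma 1.1 of the paper).

A family of surjective homomorphisms of unital `k`-algebras
`π^i_j : B_i → B_{ij} = B_{ji}` (`i ≠ j ∈ J`, `J` finite) is encoded as follows:
for each ordered pair `(i,j)` we have an algebra `C i j` (playing the role of `B_{ij}`)
together with the two maps `π i j : B i →ₐ[k] C i j` (playing `π^i_j`) and
`ρ i j : B j →ₐ[k] C i j` (playing `π^j_i`, viewed in `B_{ij}`); the identification
`B_{ij} = B_{ji}` is expressed by the hypothesis `hsym`, saying that the gluing
constraint determined by `(i,j)` coincides with the one determined by `(j,i)`.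
-/

/-- Membership in the sublattice generated by a set `S` in a lattice. -/
inductive InSublattice {α : Type*} [Lattice α] (S : Set α) : α → Prop
  | base {x : α} : x ∈ S → InSublattice S x
  | inf {x y : α} : InSublattice S x → InSublattice S y → InSublattice S (x ⊓ y)
  | sup {x y : α} : InSublattice S x → InSublattice S y → InSublattice S (x ⊔ y)



section LatticeHelpers

variable {α : Type*} [Lattice α] {S : Set α}
  (hdist : ∀ K L M : α, InSublattice S K → InSublattice S L → InSublattice S M →
      K ⊓ (L ⊔ M) = (K ⊓ L) ⊔ (K ⊓ M))

include hdist in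
lemma aux_sup_inf {K L M : α} (hK : InSublattice S K) (hL : InSublattice S L)
    (hM : InSublattice S M) : (K ⊔ L) ⊓ (K ⊔ M) = K ⊔ (L ⊓ M) := by
  have e1 : (K ⊔ L) ⊓ K = K := by rw [inf_comm]; exact inf_sup_self
  calc (K ⊔ L) ⊓ (K ⊔ M) = ((K ⊔ L) ⊓ K) ⊔ ((K ⊔ L) ⊓ M) :=
        hdist _ _ _ (hK.sup hL) hK hM
    _ = K ⊔ ((M ⊓ K) ⊔ (M ⊓ L)) := by rw [e1, inf_comm (K ⊔ L) M, hdist M K L hM hK hL]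
    _ = K ⊔ (L ⊓ M) := by rw [← sup_assoc, sup_eq_left.mpr (inf_le_right : M ⊓ K ≤ K), inf_comm M L]

lemma aux_inf'_mem {ι : Type*} {T : Finset ι} (hT : T.Nonempty) (K : ι → α)
    (hK : ∀ t ∈ T, InSublattice S (K t)) : InSublattice S (T.inf' hT K) := by
  induction hT using Finset.Nonempty.cons_induction with
  | singleton a => rw [Finset.inf'_singleton]; exact hK a (by simp)
  | cons a T ha hT ih =>
      rw [Finset.inf'_cons (H := hT)]
      exact .inf (hK a (by simp)) (ih fun t ht => hK t (by simp [ht]))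

end LatticeHelpers

section CRT

variable {R : Type*} [Ring R] {S : Set (TwoSidedIdeal R)}
  (hdist : ∀ K L M : TwoSidedIdeal R, InSublattice S K → InSublattice S L → InSublattice S M →
      K ⊓ (L ⊔ M) = (K ⊓ L) ⊔ (K ⊓ M))

lemma aux_mem_inf' {ι : Type*} {T : Finset ι} (hT : T.Nonempty) (K : ι → TwoSidedIdeal R)
    (x : R) : x ∈ T.inf' hT K ↔ ∀ t ∈ T, x ∈ K t := by
  induction hT using Finset.Nonempty.cons_induction with
  | singleton a => simp
  | cons a T ha hT ih =>
      rw [Finset.inf'_cons (H := hT), TwoSidedIdeal.mem_inf, ih]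
      simp

include hdist in
lemma aux_dual_dist {ι : Type*} {T : Finset ι} (hT : T.Nonempty) (K : ι → TwoSidedIdeal R)
    (hK : ∀ t ∈ T, InSublattice S (K t)) (N : TwoSidedIdeal R) (hN : InSublattice S N)
    (d : R) (hd : ∀ t ∈ T, d ∈ N ⊔ K t) : d ∈ N ⊔ T.inf' hT K := by
  induction hT using Finset.Nonempty.cons_induction with
  | singleton a => rw [Finset.inf'_singleton]; exact hd a (by simp)
  | cons a T ha hT ih =>
      rw [Finset.inf'_cons (H := hT), ← aux_sup_inf hdist hN (hK a (by simp))
        (aux_inf'_mem hT K fun t ht => hK t (by simp [ht])), TwoSidedIdeal.mem_inf]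
      exact ⟨hd a (by simp), ih (fun t ht => hK t (by simp [ht])) (fun t ht => hd t (by simp [ht]))⟩

include hdist in
lemma aux_crt {ι : Type*} (T : Finset ι) (K : ι → TwoSidedIdeal R)
    (hK : ∀ t ∈ T, InSublattice S (K t)) (a : ι → R)
    (hcomp : ∀ s ∈ T, ∀ t ∈ T, a s - a t ∈ K s ⊔ K t) :
    ∃ x : R, ∀ t ∈ T, x - a t ∈ K t := by
  classical
  induction T using Finset.induction_on with
  | empty => exact ⟨0, by simp⟩
  | insert n T hn ih0 =>
      obtain ⟨x, hx⟩ := ih0 (fun t ht => hK t (by simp [ht]))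
        (fun s hs t ht => hcomp s (by simp [hs]) t (by simp [ht]))
      rcases T.eq_empty_or_nonempty with rfl | hT
      · refine ⟨a n, fun t ht => ?_⟩
        simp only [Finset.mem_insert, Finset.notMem_empty, or_false] at ht
        subst ht; simpa using (K t).zero_mem
      · have hd : a n - x ∈ K n ⊔ T.inf' hT K := by
          refine aux_dual_dist hdist hT K (fun t ht => hK t (by simp [ht])) (K n)
            (hK n (by simp)) _ (fun t ht => ?_)
          have h1 : a n - a t ∈ K n ⊔ K t := hcomp n (by simp) t (by simp [ht])
          have h2 : a t - x ∈ K t := by simpa using (K t).neg_mem (hx t ht)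
          have : a n - x = (a n - a t) + (a t - x) := by abel
          rw [this]
          exact TwoSidedIdeal.add_mem _ h1 (TwoSidedIdeal.mem_sup_right h2)
        obtain ⟨u, hu, v, hv, huv⟩ := TwoSidedIdeal.mem_sup.1 hd
        rw [aux_mem_inf'] at hv
        refine ⟨x + v, fun t ht => ?_⟩
        rcases Finset.mem_insert.1 ht with rfl | ht
        · have hu' : u = a t - x - v := by rw [← huv]; abel
          have : x + v - a t = -u := by rw [hu']; abel
          rw [this]; exact (K t).neg_mem hu
        · have : x + v - a t = (x - a t) + v := by abel
          rw [this]; exact TwoSidedIdeal.add_mem _ (hx t ht) (hv t ht)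

end CRT


section QuotEquiv

variable {k : Type*} [CommRing k] {A B' : Type*} [Ring A] [Ring B'] [Algebra k A] [Algebra k B']

lemma aux_quot_equiv (f : A →ₐ[k] B') (hf : Function.Surjective f)
    (I : TwoSidedIdeal A) (hI : I = TwoSidedIdeal.ker f) :
    ∃ e : I.ringCon.Quotient ≃ₐ[k] B', ∀ a : A, e (I.ringCon.mk' a) = f a := by
  subst hI
  set I := TwoSidedIdeal.ker f
  have hcompat : ∀ a b : A, I.ringCon a b → f a = f b := by
    intro a b hab
    have : a - b ∈ I := (I.rel_iff a b).1 hab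
    rw [TwoSidedIdeal.mem_ker, map_sub, sub_eq_zero] at this
    exact this
  let g : I.ringCon.Quotient →ₐ[k] B' :=
    { toFun := Quotient.lift f hcompat
      map_one' := map_one f
      map_mul' := fun x y => Quotient.inductionOn₂ x y fun a b => map_mul f a b
      map_zero' := map_zero f
      map_add' := fun x y => Quotient.inductionOn₂ x y fun a b => map_add f a b
      commutes' := fun r => f.commutes r }
  have hg : Function.Bijective g := by
    constructor
    · intro x y h
      refine Quotient.inductionOn₂ x y (fun a b h => ?_) h
      have : a - b ∈ I := by
        rw [TwoSidedIdeal.mem_ker, map_sub, sub_eq_zero]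
        exact h
      exact Quotient.sound ((I.rel_iff a b).2 this)
    · intro y
      obtain ⟨a, rfl⟩ := hf y
      exact ⟨I.ringCon.mk' a, rfl⟩
  exact ⟨AlgEquiv.ofBijective g hg, fun a => rfl⟩

end QuotEquiv

section Ext
variable {k : Type*} [CommRing k] {J : Type*} {B : J → Type*}
  [∀ i, Ring (B i)] [∀ i, Algebra k (B i)]
  {C : J → J → Type*} [∀ i j, Ring (C i j)] [∀ i j, Algebra k (C i j)]
  (π : ∀ i j, B i →ₐ[k] C i j) (ρ : ∀ i j, B j →ₐ[k] C i j)

/-- compatibility of a partial family on a finset -/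
def AuxCompat (T : Finset J) (b : ∀ j, B j) : Prop :=
  ∀ s ∈ T, ∀ t ∈ T, s ≠ t → π s t (b s) = ρ s t (b t)

theorem aux_extend_step
    [DecidableEq J]
    (hρsurj : ∀ i j, i ≠ j → Function.Surjective (ρ i j))
    (hsym : ∀ i j, i ≠ j → ∀ (x : B i) (y : B j),
      π i j x = ρ i j y ↔ π j i y = ρ j i x)
    (hco2 : ∀ i j l, i ≠ j → i ≠ l → j ≠ l →
      ∀ (a : B i) (b : B j) (c : B l),
      π i j a - ρ i j b ∈ (π i j) '' (TwoSidedIdeal.ker (π i l) : Set (B i)) →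
      π j l b - ρ j l c ∈ (π j l) '' (TwoSidedIdeal.ker (π j i) : Set (B j)) →
      π i l a - ρ i l c ∈ (π i l) '' (TwoSidedIdeal.ker (π i j) : Set (B i)))
    (hdist : ∀ i, ∀ K L M : TwoSidedIdeal (B i),
      InSublattice {I | ∃ j, j ≠ i ∧ I = TwoSidedIdeal.ker (π i j)} K →
      InSublattice {I | ∃ j, j ≠ i ∧ I = TwoSidedIdeal.ker (π i j)} L →
      InSublattice {I | ∃ j, j ≠ i ∧ I = TwoSidedIdeal.ker (π i j)} M →
      K ⊓ (L ⊔ M) = (K ⊓ L) ⊔ (K ⊓ M))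
    (T : Finset J) (m : J) (hm : m ∉ T) (b : ∀ j, B j) (hb : AuxCompat π ρ T b) :
    ∃ x : B m, AuxCompat π ρ (insert m T) (Function.update b m x) := by
  classical
  have hne : ∀ s ∈ T, s ≠ m := fun s hs hsm => hm (hsm ▸ hs)
  -- choose pointwise lifts
  have hch : ∀ s, s ∈ T → ∃ x : B m, ρ s m x = π s m (b s) :=
    fun s hs => hρsurj s m (hne s hs) (π s m (b s))
  set xf : J → B m := fun s => if h : s ∈ T then Classical.choose (hch s h) else 0 with hxf
  have hx : ∀ s ∈ T, ρ s m (xf s) = π s m (b s) := by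
    intro s hs
    simp only [hxf, dif_pos hs]
    exact Classical.choose_spec (hch s hs)
  -- each lift matches under the m-side maps
  have hxm : ∀ s ∈ T, π m s (xf s) = ρ m s (b s) := by
    intro s hs
    exact (hsym s m (hne s hs) (b s) (xf s)).1 (hx s hs).symm
  -- pairwise compatibility of the lifts
  have hpair : ∀ s ∈ T, ∀ t ∈ T, xf s - xf t ∈
      TwoSidedIdeal.ker (π m s) ⊔ TwoSidedIdeal.ker (π m t) := by
    intro s hs t ht
    by_cases hst : s = t
    · subst hst; simpa using (TwoSidedIdeal.ker (π m s) ⊔ TwoSidedIdeal.ker (π m s)).zero_mem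
    · have key : π m t (xf s) - ρ m t (b t) ∈
          (π m t) '' (TwoSidedIdeal.ker (π m s) : Set (B m)) := by
        refine hco2 m s t (Ne.symm (hne s hs)) (Ne.symm (hne t ht)) hst (xf s) (b s) (b t) ?_ ?_
        · rw [hxm s hs, sub_self]
          exact ⟨0, by simp [TwoSidedIdeal.mem_ker], by simp⟩
        · rw [hb s hs t ht hst, sub_self]
          exact ⟨0, by simp [TwoSidedIdeal.mem_ker], by simp⟩
      obtain ⟨u, hu, hu2⟩ := key
      rw [← hxm t ht] at hu2
      refine TwoSidedIdeal.mem_sup.2 ⟨u, hu, xf s - xf t - u, ?_, by abel⟩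
      rw [TwoSidedIdeal.mem_ker, map_sub, map_sub, hu2]
      abel
  -- simultaneous lift via CRT
  obtain ⟨x, hxlift⟩ := aux_crt (hdist m) T (fun s => TwoSidedIdeal.ker (π m s))
    (fun s hs => InSublattice.base ⟨s, hne s hs, rfl⟩) xf hpair
  have hxs : ∀ s ∈ T, π m s x = ρ m s (b s) := by
    intro s hs
    have h0 : π m s (x - xf s) = 0 := (TwoSidedIdeal.mem_ker _).1 (hxlift s hs)
    rw [map_sub, sub_eq_zero] at h0
    rw [h0, hxm s hs]
  refine ⟨x, ?_⟩
  intro s hs t ht hst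
  rcases Finset.mem_insert.1 hs with rfl | hs'
  · rcases Finset.mem_insert.1 ht with rfl | ht'
    · exact absurd rfl hst
    · rw [Function.update_self, Function.update_of_ne (hne t ht') _ _]
      exact hxs t ht'
  · rcases Finset.mem_insert.1 ht with rfl | ht'
    · rw [Function.update_self, Function.update_of_ne (hne s hs') _ _]
      exact (hsym s t hst (b s) x).2 (hxs s hs')
    · rw [Function.update_of_ne (hne s hs') _ _,
        Function.update_of_ne (hne t ht') _ _]
      exact hb s hs' t ht' hst
theorem aux_extend_full
    [Fintype J] [DecidableEq J]
    (hρsurj : ∀ i j, i ≠ j → Function.Surjective (ρ i j))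
    (hsym : ∀ i j, i ≠ j → ∀ (x : B i) (y : B j),
      π i j x = ρ i j y ↔ π j i y = ρ j i x)
    (hco2 : ∀ i j l, i ≠ j → i ≠ l → j ≠ l →
      ∀ (a : B i) (b : B j) (c : B l),
      π i j a - ρ i j b ∈ (π i j) '' (TwoSidedIdeal.ker (π i l) : Set (B i)) →
      π j l b - ρ j l c ∈ (π j l) '' (TwoSidedIdeal.ker (π j i) : Set (B j)) →
      π i l a - ρ i l c ∈ (π i l) '' (TwoSidedIdeal.ker (π i j) : Set (B i)))
    (hdist : ∀ i, ∀ K L M : TwoSidedIdeal (B i),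
      InSublattice {I | ∃ j, j ≠ i ∧ I = TwoSidedIdeal.ker (π i j)} K →
      InSublattice {I | ∃ j, j ≠ i ∧ I = TwoSidedIdeal.ker (π i j)} L →
      InSublattice {I | ∃ j, j ≠ i ∧ I = TwoSidedIdeal.ker (π i j)} M →
      K ⊓ (L ⊔ M) = (K ⊓ L) ⊔ (K ⊓ M)) :
    ∀ (n : ℕ) (T : Finset J), (Finset.univ \ T).card ≤ n → ∀ b, AuxCompat π ρ T b →
    ∃ b' : ∀ j, B j, (∀ i j, i ≠ j → π i j (b' i) = ρ i j (b' j)) ∧ ∀ s ∈ T, b' s = b s := by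
  intro n
  induction n with
  | zero =>
      intro T hT b hb
      have hTuniv : T = Finset.univ := by
        have : Finset.univ \ T = ∅ := Finset.card_eq_zero.1 (Nat.le_zero.1 hT)
        have h2 : (Finset.univ : Finset J) ⊆ T := by
          intro x hx
          by_contra hxT
          exact (Finset.notMem_empty x) (this ▸ Finset.mem_sdiff.2 ⟨hx, hxT⟩)
        exact Finset.eq_univ_iff_forall.2 fun x => h2 (Finset.mem_univ x)
      subst hTuniv
      exact ⟨b, fun i j hij => hb i (Finset.mem_univ i) j (Finset.mem_univ j) hij,
        fun s _ => rfl⟩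
  | succ n ih =>
      intro T hT b hb
      by_cases hTuniv : T = Finset.univ
      · subst hTuniv
        exact ⟨b, fun i j hij => hb i (Finset.mem_univ i) j (Finset.mem_univ j) hij,
          fun s _ => rfl⟩
      · have hne : (Finset.univ \ T).Nonempty := by
          rw [Finset.sdiff_nonempty]
          intro hsub
          exact hTuniv (Finset.eq_univ_iff_forall.2 fun x => hsub (Finset.mem_univ x))
        obtain ⟨m, hm⟩ := hne
        have hmT : m ∉ T := (Finset.mem_sdiff.1 hm).2
        obtain ⟨x, hx⟩ := aux_extend_step π ρ hρsurj hsym hco2 hdist T m hmT b hb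
        have hcard : (Finset.univ \ insert m T).card ≤ n := by
          have : Finset.univ \ insert m T = (Finset.univ \ T).erase m := by
            ext y; simp [Finset.mem_sdiff, Finset.mem_erase, and_comm, not_or, and_assoc]
          rw [this, Finset.card_erase_of_mem hm]
          omega
        obtain ⟨b', hb'1, hb'2⟩ := ih (insert m T) hcard _ hx
        refine ⟨b', hb'1, fun s hs => ?_⟩
        rw [hb'2 s (Finset.mem_insert_of_mem hs),
          Function.update_of_ne (show s ≠ m from fun hsm => hmT (hsm ▸ hs)) _ _]

end Ext


variable (k : Type*) [CommRing k] {J : Type*} (B : J → Type*)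
  [∀ i, Ring (B i)] [∀ i, Algebra k (B i)]
  (C : J → J → Type*) [∀ i j, Ring (C i j)] [∀ i j, Algebra k (C i j)]
  (π : ∀ i j, B i →ₐ[k] C i j) (ρ : ∀ i j, B j →ₐ[k] C i j)

/-- The multi-pullback `B^π` of the family, as a subalgebra of `∏_{i ∈ J} B_i`. -/
def multiPullback : Subalgebra k (∀ i, B i) where
  carrier := {b | ∀ i j, i ≠ j → π i j (b i) = ρ i j (b j)}
  mul_mem' := by
    intro x y hx hy i j hij
    simp only [Pi.mul_apply, map_mul, hx i j hij, hy i j hij]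
  one_mem' := by
    intro i j hij
    simp only [Pi.one_apply, map_one]
  add_mem' := by
    intro x y hx hy i j hij
    simp only [Pi.add_apply, map_add, hx i j hij, hy i j hij]
  zero_mem' := by
    intro i j hij
    simp only [Pi.zero_apply, map_zero]
  algebraMap_mem' := by
    intro r i j hij
    simp only [Pi.algebraMap_apply, AlgHom.commutes]

/-- The restriction `π_i : B^π → B_i` of the `i`-th canonical projection. -/
noncomputable def multiPullbackProj (i : J) : multiPullback k B C π ρ →ₐ[k] B i :=
  (Pi.evalAlgHom k B i).comp (multiPullback k B C π ρ).val

set_option maxHeartbeats 2000000 in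
theorem multiPullback_proj_surjective_and_ker_pair
    [Finite J]
    -- the family consists of epimorphisms:
    (hπsurj : ∀ i j, i ≠ j → Function.Surjective (π i j))
    (hρsurj : ∀ i j, i ≠ j → Function.Surjective (ρ i j))
    -- `B_{ij} = B_{ji}`: the constraints of `(i,j)` and `(j,i)` coincide:
    (hsym : ∀ i j, i ≠ j → ∀ (x : B i) (y : B j),
      π i j x = ρ i j y ↔ π j i y = ρ j i x)
    -- cocycle condition, part (1): `π^i_j(ker π^i_k) = π^j_i(ker π^j_k)`:
    (hco1 : ∀ i j l, i ≠ j → i ≠ l → j ≠ l →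
      (π i j) '' (TwoSidedIdeal.ker (π i l) : Set (B i)) =
      (ρ i j) '' (TwoSidedIdeal.ker (π j l) : Set (B j)))
    -- cocycle condition, part (2): `φ^{il}_j = φ^{ij}_l ∘ φ^{jl}_i`, elementwise:
    (hco2 : ∀ i j l, i ≠ j → i ≠ l → j ≠ l →
      ∀ (a : B i) (b : B j) (c : B l),
      π i j a - ρ i j b ∈ (π i j) '' (TwoSidedIdeal.ker (π i l) : Set (B i)) →
      π j l b - ρ j l c ∈ (π j l) '' (TwoSidedIdeal.ker (π j i) : Set (B j)) →
      π i l a - ρ i l c ∈ (π i l) '' (TwoSidedIdeal.ker (π i j) : Set (B i)))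
    -- the kernels of the `π^i_j` generate a distributive lattice of
    -- two-sided ideals of `B_i`:
    (hdist : ∀ i, ∀ K L M : TwoSidedIdeal (B i),
      InSublattice {I | ∃ j, j ≠ i ∧ I = TwoSidedIdeal.ker (π i j)} K →
      InSublattice {I | ∃ j, j ≠ i ∧ I = TwoSidedIdeal.ker (π i j)} L →
      InSublattice {I | ∃ j, j ≠ i ∧ I = TwoSidedIdeal.ker (π i j)} M →
      K ⊓ (L ⊔ M) = (K ⊓ L) ⊔ (K ⊓ M)) :
    -- each `π_i` is surjective, so `B_i ≅ B^π / ker π_i` ...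
    (∀ i, Function.Surjective (multiPullbackProj k B C π ρ i) ∧
      ∃ e : (TwoSidedIdeal.ker (multiPullbackProj k B C π ρ i)).ringCon.Quotient
              ≃ₐ[k] B i,
        ∀ b : multiPullback k B C π ρ,
          e ((TwoSidedIdeal.ker (multiPullbackProj k B C π ρ i)).ringCon.mk' b) =
            multiPullbackProj k B C π ρ i b) ∧
    -- ... and for distinct `i, j` the map `π_{ij} = π^i_j ∘ π_i = π^j_i ∘ π_j` is a
    -- well-defined surjection whose kernel is `ker π_i + ker π_j`, so that
    -- `B_{ij} ≅ B^π / (ker π_i + ker π_j)`: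
    (∀ i j, i ≠ j →
      ((π i j).comp (multiPullbackProj k B C π ρ i) =
        (ρ i j).comp (multiPullbackProj k B C π ρ j)) ∧
      Function.Surjective ((π i j).comp (multiPullbackProj k B C π ρ i)) ∧
      TwoSidedIdeal.ker ((π i j).comp (multiPullbackProj k B C π ρ i)) =
        TwoSidedIdeal.ker (multiPullbackProj k B C π ρ i) ⊔
          TwoSidedIdeal.ker (multiPullbackProj k B C π ρ j) ∧
      ∃ e : (TwoSidedIdeal.ker (multiPullbackProj k B C π ρ i) ⊔
              TwoSidedIdeal.ker (multiPullbackProj k B C π ρ j)).ringCon.Quotient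
              ≃ₐ[k] C i j,
        ∀ b : multiPullback k B C π ρ,
          e ((TwoSidedIdeal.ker (multiPullbackProj k B C π ρ i) ⊔
              TwoSidedIdeal.ker (multiPullbackProj k B C π ρ j)).ringCon.mk' b) =
            π i j (multiPullbackProj k B C π ρ i b)) := by
  classical
  cases nonempty_fintype J
  have ext : ∀ (T : Finset J) (b : ∀ j, B j), AuxCompat π ρ T b →
      ∃ b' : multiPullback k B C π ρ, ∀ s ∈ T, (b' : ∀ j, B j) s = b s := by
    intro T b hb
    obtain ⟨b', h1, h2⟩ := aux_extend_full π ρ hρsurj hsym hco2 hdist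
      (Finset.univ \ T).card T le_rfl b hb
    exact ⟨⟨b', h1⟩, h2⟩
  have hsurj : ∀ i, Function.Surjective (multiPullbackProj k B C π ρ i) := by
    intro i y
    have hc : AuxCompat π ρ {i} (Function.update (fun j => (0 : B j)) i y) := by
      intro s hs t ht hst
      rw [Finset.mem_singleton] at hs ht
      exact absurd (hs.trans ht.symm) hst
    obtain ⟨b', hb'⟩ := ext {i} _ hc
    refine ⟨b', ?_⟩
    have h := hb' i (Finset.mem_singleton_self i)
    rw [Function.update_self] at h
    exact h
  have hlift : ∀ i j, i ≠ j → ∀ y : B i, π i j y = 0 →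
      ∃ v : multiPullback k B C π ρ, (v : ∀ l, B l) i = y ∧ (v : ∀ l, B l) j = 0 := by
    intro i j hij y hy
    set b : ∀ l, B l := Function.update (fun l => (0 : B l)) i y with hbdef
    have hbi : b i = y := Function.update_self _ _ _
    have hbj : b j = 0 := Function.update_of_ne (Ne.symm hij) _ _
    have h1 : π i j (b i) = ρ i j (b j) := by rw [hbi, hbj, hy, map_zero]
    have hc : AuxCompat π ρ {i, j} b := by
      intro s hs t ht hst
      simp only [Finset.mem_insert, Finset.mem_singleton] at hs ht
      rcases hs with rfl | rfl <;> rcases ht with rfl | rfl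
      · exact absurd rfl hst
      · exact h1
      · exact (hsym t s (Ne.symm hst) (b t) (b s)).1 h1
      · exact absurd rfl hst
    obtain ⟨v, hv⟩ := ext {i, j} b hc
    exact ⟨v, (hv i (by simp)).trans hbi, (hv j (by simp)).trans hbj⟩
  refine ⟨fun i => ⟨hsurj i, aux_quot_equiv _ (hsurj i) _ rfl⟩, ?_⟩
  intro i j hij
  have heq : (π i j).comp (multiPullbackProj k B C π ρ i) =
      (ρ i j).comp (multiPullbackProj k B C π ρ j) := by
    ext b
    exact b.2 i j hij
  have hsurj2 : Function.Surjective ((π i j).comp (multiPullbackProj k B C π ρ i)) := by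
    rw [AlgHom.coe_comp]
    exact (hπsurj i j hij).comp (hsurj i)
  have hker : TwoSidedIdeal.ker ((π i j).comp (multiPullbackProj k B C π ρ i)) =
      TwoSidedIdeal.ker (multiPullbackProj k B C π ρ i) ⊔
        TwoSidedIdeal.ker (multiPullbackProj k B C π ρ j) := by
    refine le_antisymm ?_ (sup_le ?_ ?_)
    · rw [TwoSidedIdeal.le_iff]
      intro x hx
      rw [SetLike.mem_coe, TwoSidedIdeal.mem_ker, AlgHom.comp_apply] at hx
      obtain ⟨v, hvi, hvj⟩ := hlift i j hij (multiPullbackProj k B C π ρ i x) hx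
      rw [SetLike.mem_coe]
      refine TwoSidedIdeal.mem_sup.2 ⟨x - v, ?_, v, ?_, sub_add_cancel x v⟩
      · rw [TwoSidedIdeal.mem_ker, map_sub]
        have h2 : multiPullbackProj k B C π ρ i v = multiPullbackProj k B C π ρ i x := hvi
        rw [h2, sub_self]
      · rw [TwoSidedIdeal.mem_ker]
        exact hvj
    · rw [TwoSidedIdeal.le_iff]
      intro x hx
      rw [SetLike.mem_coe, TwoSidedIdeal.mem_ker] at hx ⊢
      rw [AlgHom.comp_apply, hx, map_zero]
    · rw [TwoSidedIdeal.le_iff]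
      intro x hx
      rw [SetLike.mem_coe, TwoSidedIdeal.mem_ker] at hx ⊢
      rw [AlgHom.comp_apply]
      have h2 : π i j ((x : ∀ l, B l) i) = ρ i j ((x : ∀ l, B l) j) := x.2 i j hij
      have h3 : multiPullbackProj k B C π ρ j x = 0 := hx
      calc π i j (multiPullbackProj k B C π ρ i x)
          = ρ i j ((x : ∀ l, B l) j) := h2
        _ = 0 := by rw [show ((x : ∀ l, B l) j) = multiPullbackProj k B C π ρ j x from rfl,
              h3, map_zero]
  obtain ⟨e, he⟩ := aux_quot_equiv ((π i j).comp (multiPullbackProj k B C π ρ i))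
    hsurj2 _ hker.symm
  exact ⟨heq, hsurj2, hker, e, fun b => he b⟩
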